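/- Let a,b ∈ 𝔹²∖{0} with a·conj(b) ∉ ℝ and |a| ≠ |b|, let a_*, b_* be the endpoints on the unit circle of the hyperbolic line through a and b, and set c = LIS[a,b,a_*,b_*]. Then |c| > 1, and the hyperbolic midpoint m of a and b satisfies |m − c|² = |c|² − 1; that is, m lies on the circle centered at c that is orthogonal to the unit circle. -/

import Mathlib

open ComplexConjugate


/-- The intersection point of the Euclidean lines through `a, b` and through `c, d`. -/
noncomputable def LIS (a b c d : ℂ) : ℂ :=
  ((conj a * b - a * conj b) * (c - d) - (conj c * d - c * conj d) * (a - b)) /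
    ((conj a - conj b) * (c - d) - (conj c - conj d) * (a - b))

/-- The endpoint, near `a`, on the unit circle of the hyperbolic line through `a` and `b`;
so `endpt a b = a_*` and `endpt b a = b_*`. -/
noncomputable def endpt (a b : ℂ) : ℂ :=
  (b * (1 - a * conj b) * (‖a - b‖ : ℂ) +
      (a - b) * (‖1 - a * conj b‖ : ℂ)) /
    ((1 - a * conj b) * (‖a - b‖ : ℂ) +
      conj b * (a - b) * (‖1 - a * conj b‖ : ℂ))

/-- The hyperbolic metric of the unit disk. -/
noncomputable def rho (x y : ℂ) : ℝ :=
  2 * Real.arsinh (‖x - y‖ /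
    Real.sqrt ((1 - ‖x‖ ^ 2) * (1 - ‖y‖ ^ 2)))

lemma assemble (a b x y : ℂ)
    (F1 : x * conj x = 1) (F2 : y * conj y = 1) (hxy : x ≠ y)
    (hCh : (a * conj a + 1) * conj b - (b * conj b + 1) * conj a ≠ 0)
    (hd : a * conj a - b * conj b ≠ 0)
    (hdet : a * conj b - conj a * b ≠ 0)
    (F4 : (x + y) * ((a * conj a + 1) * conj b - (b * conj b + 1) * conj a)
        = 2 * (a * conj b - conj a * b))
    (F5 : (x * y) * ((a * conj a + 1) * conj b - (b * conj b + 1) * conj a)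
        = a * (b * conj b + 1) - b * (a * conj a + 1)) :
    LIS a b x y = (a * (1 - b * conj b) - b * (1 - a * conj a)) / (a * conj a - b * conj b) := by
  have hx0 : x ≠ 0 := by intro h; rw [h, zero_mul] at F1; exact one_ne_zero F1.symm
  have hy0 : y ≠ 0 := by intro h; rw [h, zero_mul] at F2; exact one_ne_zero F2.symm
  set Ch : ℂ := (a * conj a + 1) * conj b - (b * conj b + 1) * conj a with hChdef
  have hN : ((conj a * b - a * conj b) * (x - y) - (conj x * y - x * conj y) * (a - b)) * (x * y * Ch)
      = (x - y) * (a * conj b - conj a * b) * (a * (1 - b * conj b) - b * (1 - a * conj a)) := by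
    linear_combination ((b - a) * y ^ 2 * Ch) * F1 + ((a - b) * x ^ 2 * Ch) * F2 +
      (b * y - b * x - a * y + a * x) * F4 +
      (-(b * (conj a) * y) + b * (conj a) * x + a * (conj b) * y - a * (conj b) * x) * F5
  have hDen : ((conj a - conj b) * (x - y) - (conj x - conj y) * (a - b)) * (x * y * Ch)
      = (x - y) * (a * conj a - b * conj b) * (a * conj b - conj a * b) := by
    linear_combination ((b - a) * y * Ch) * F1 + ((a - b) * x * Ch) * F2 +
      ((conj b) * y - (conj b) * x - (conj a) * y + (conj a) * x) * F5 +
      (b * y - b * x - a * y + a * x) * hChdef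
  have hxyCh : x * y * Ch ≠ 0 := mul_ne_zero (mul_ne_zero hx0 hy0) hCh
  have hDen0 : (conj a - conj b) * (x - y) - (conj x - conj y) * (a - b) ≠ 0 := by
    intro h
    rw [h, zero_mul] at hDen
    exact (mul_ne_zero (mul_ne_zero (sub_ne_zero.2 hxy) hd) hdet) hDen.symm
  rw [LIS, div_eq_div_iff hDen0 hd]
  apply mul_right_cancel₀ hxyCh
  linear_combination (a * conj a - b * conj b) * hN -
    (a * (1 - b * conj b) - b * (1 - a * conj a)) * hDen

lemma c_eq (a b : ℂ) (ha : ‖a‖ < 1) (hb : ‖b‖ < 1)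
    (hnc : a * conj b ∉ Set.range (Complex.ofReal))
    (habs : ‖a‖ ≠ ‖b‖) :
    LIS a b (endpt a b) (endpt b a)
      = (a * (1 - b * conj b) - b * (1 - a * conj a)) / (a * conj a - b * conj b) := by
  have him : (a * conj b).im ≠ 0 := by
    intro h0
    exact hnc ⟨(a * conj b).re, by apply Complex.ext <;> simp [h0]⟩
  have hab : a ≠ b := by
    intro h; apply him; rw [h, Complex.mul_conj]; simp
  have habv : ‖a * conj b‖ < 1 := by
    rw [norm_mul, Complex.norm_conj]
    nlinarith [norm_nonneg a, norm_nonneg b]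
  have hv : (1 : ℂ) - a * conj b ≠ 0 := by
    intro h
    have h1 : a * conj b = 1 := by linear_combination -h
    rw [h1] at habv; simp at habv
  have htri : ∀ X Y : ℂ, ‖X - Y‖ ≤ ‖X‖ + ‖Y‖ := by
    intro X Y; simpa using norm_sub_le X Y
  set r : ℝ := ‖a - b‖ with hrdef
  set s : ℝ := ‖1 - a * conj b‖ with hsdef
  have hr : 0 < r := norm_pos_iff.2 (sub_ne_zero.2 hab)
  have hs : 0 < s := norm_pos_iff.2 hv
  have hR : ((r : ℝ) : ℂ) ^ 2 = (a - b) * (conj a - conj b) := by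
    rw [hrdef, ← Complex.ofReal_pow, Complex.sq_norm, ← Complex.mul_conj, map_sub]
  have hS : ((s : ℝ) : ℂ) ^ 2 = (1 - a * conj b) * (1 - conj a * b) := by
    rw [hsdef, ← Complex.ofReal_pow, Complex.sq_norm, ← Complex.mul_conj]
    simp [map_sub, map_mul, Complex.conj_conj]
  have hna1 : Complex.normSq a < 1 := by
    rw [← Complex.sq_norm]; nlinarith [norm_nonneg a]
  have hnb1 : Complex.normSq b < 1 := by
    rw [← Complex.sq_norm]; nlinarith [norm_nonneg b]
  have hsr : r < s := by
    have key : Complex.normSq (1 - a * conj b) - Complex.normSq (a - b)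
        = (1 - Complex.normSq a) * (1 - Complex.normSq b) := by
      simp [Complex.normSq_apply, Complex.sub_re, Complex.sub_im, Complex.mul_re,
        Complex.mul_im, Complex.one_re, Complex.one_im, Complex.conj_re, Complex.conj_im]
      ring
    have h1 : s ^ 2 = Complex.normSq (1 - a * conj b) := by rw [hsdef, Complex.sq_norm]
    have h2 : r ^ 2 = Complex.normSq (a - b) := by rw [hrdef, Complex.sq_norm]
    nlinarith
  -- denominators of the endpoints
  have hD0 : (1 - a * conj b) * (r : ℂ) + conj b * (a - b) * (s : ℂ) ≠ 0 := by
    intro h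
    have h1 : ‖(1 - a * conj b) * (r : ℂ)‖
        = ‖((1 - a * conj b) * (r : ℂ) + conj b * (a - b) * (s : ℂ))
            - conj b * (a - b) * (s : ℂ)‖ := by congr 1; ring
    have h2 := h1.trans_le (htri _ _)
    rw [h] at h2
    simp only [norm_mul, Complex.norm_real, Real.norm_eq_abs, Complex.norm_conj, norm_zero, zero_add] at h2
    rw [← hsdef, ← hrdef, abs_of_pos hr, abs_of_pos hs] at h2
    nlinarith [mul_pos (by linarith : (0:ℝ) < 1 - ‖b‖) (mul_pos hr hs)]
  have hD20 : (1 - b * conj a) * (r : ℂ) + conj a * (b - a) * (s : ℂ) ≠ 0 := by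
    intro h
    have h1 : ‖(1 - b * conj a) * (r : ℂ)‖
        = ‖((1 - b * conj a) * (r : ℂ) + conj a * (b - a) * (s : ℂ))
            - conj a * (b - a) * (s : ℂ)‖ := by congr 1; ring
    have h2 := h1.trans_le (htri _ _)
    rw [h] at h2
    simp only [norm_mul, Complex.norm_real, Real.norm_eq_abs, Complex.norm_conj, norm_zero, zero_add] at h2
    have e1 : ‖1 - b * conj a‖ = s := by
      rw [hsdef, show (1 : ℂ) - b * conj a = conj (1 - a * conj b) by
        simp [map_sub, map_mul, Complex.conj_conj]; ring, Complex.norm_conj]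
    have e2 : ‖b - a‖ = r := by rw [hrdef, norm_sub_rev]
    rw [e1, e2, abs_of_pos hr, abs_of_pos hs] at h2
    nlinarith [mul_pos (by linarith : (0:ℝ) < 1 - ‖a‖) (mul_pos hr hs)]
  have hea : endpt a b
      = (b * (1 - a * conj b) * (r : ℂ) + (a - b) * (s : ℂ)) /
        ((1 - a * conj b) * (r : ℂ) + conj b * (a - b) * (s : ℂ)) := rfl
  have heb : endpt b a
      = (a * (1 - b * conj a) * (r : ℂ) + (b - a) * (s : ℂ)) /
        ((1 - b * conj a) * (r : ℂ) + conj a * (b - a) * (s : ℂ)) := by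
    unfold endpt
    rw [show ‖b - a‖ = r from by rw [hrdef, norm_sub_rev],
      show ‖1 - b * conj a‖ = s from by
        rw [hsdef, show (1 : ℂ) - b * conj a = conj (1 - a * conj b) by
          simp [map_sub, map_mul, Complex.conj_conj]; ring, Complex.norm_conj]]
  -- conjugates
  have hcN : conj (b * (1 - a * conj b) * (r : ℂ) + (a - b) * (s : ℂ))
      = conj b * (1 - conj a * b) * (r : ℂ) + (conj a - conj b) * (s : ℂ) := by
    simp [map_add, map_mul, map_sub, map_one, Complex.conj_conj, Complex.conj_ofReal]
  have hcD : conj ((1 - a * conj b) * (r : ℂ) + conj b * (a - b) * (s : ℂ))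
      = (1 - conj a * b) * (r : ℂ) + b * (conj a - conj b) * (s : ℂ) := by
    simp [map_add, map_mul, map_sub, map_one, Complex.conj_conj, Complex.conj_ofReal]
  have hcN2 : conj (a * (1 - b * conj a) * (r : ℂ) + (b - a) * (s : ℂ))
      = conj a * (1 - conj b * a) * (r : ℂ) + (conj b - conj a) * (s : ℂ) := by
    simp [map_add, map_mul, map_sub, map_one, Complex.conj_conj, Complex.conj_ofReal]
  have hcD2 : conj ((1 - b * conj a) * (r : ℂ) + conj a * (b - a) * (s : ℂ))
      = (1 - conj b * a) * (r : ℂ) + a * (conj b - conj a) * (s : ℂ) := by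
    simp [map_add, map_mul, map_sub, map_one, Complex.conj_conj, Complex.conj_ofReal]
  have hcD0 : (1 - conj a * b) * (r : ℂ) + b * (conj a - conj b) * (s : ℂ) ≠ 0 := by
    rw [← hcD]; intro h; apply hD0
    have := congrArg conj h
    simpa [Complex.conj_conj] using this
  have hcD20 : (1 - conj b * a) * (r : ℂ) + a * (conj b - conj a) * (s : ℂ) ≠ 0 := by
    rw [← hcD2]; intro h; apply hD20
    have := congrArg conj h
    simpa [Complex.conj_conj] using this
  -- unit circle facts
  have F1 : endpt a b * conj (endpt a b) = 1 := by
    rw [hea, map_div₀, hcN, hcD, div_mul_div_comm, div_eq_one_iff_eq (mul_ne_zero hD0 hcD0)]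
    linear_combination ((-1 : ℂ) + b*(conj b) + b*(conj a) + (-1 : ℂ)*b^2*(conj a)*(conj b) + a*(conj b) + (-1 : ℂ)*a*b*(conj b)^2 + (-1 : ℂ)*a*b*(conj a)*(conj b) + a*b^2*(conj a)*(conj b)^2) * hR + (b*(conj b) + (-1 : ℂ)*b*(conj a) + (-1 : ℂ)*b^2*(conj b)^2 + b^2*(conj a)*(conj b) + (-1 : ℂ)*a*(conj b) + a*(conj a) + a*b*(conj b)^2 + (-1 : ℂ)*a*b*(conj a)*(conj b)) * hS
  have F2 : endpt b a * conj (endpt b a) = 1 := by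
    rw [heb, map_div₀, hcN2, hcD2, div_mul_div_comm, div_eq_one_iff_eq (mul_ne_zero hD20 hcD20)]
    linear_combination ((-1 : ℂ) + b*(conj a) + a*(conj b) + a*(conj a) + (-1 : ℂ)*a*b*(conj a)*(conj b) + (-1 : ℂ)*a*b*(conj a)^2 + (-1 : ℂ)*a^2*(conj a)*(conj b) + a^2*b*(conj a)^2*(conj b)) * hR + (b*(conj b) + (-1 : ℂ)*b*(conj a) + (-1 : ℂ)*a*(conj b) + a*(conj a) + (-1 : ℂ)*a*b*(conj a)*(conj b) + a*b*(conj a)^2 + a^2*(conj a)*(conj b) + (-1 : ℂ)*a^2*(conj a)^2) * hS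
  -- distinct endpoints
  have hxy : endpt a b ≠ endpt b a := by
    rw [hea, heb]
    intro h
    rw [div_eq_div_iff hD0 hD20] at h
    have h3 : (b * (1 - a * conj b) * (r : ℂ) + (a - b) * (s : ℂ))
          * ((1 - b * conj a) * (r : ℂ) + conj a * (b - a) * (s : ℂ))
        - (a * (1 - b * conj a) * (r : ℂ) + (b - a) * (s : ℂ))
          * ((1 - a * conj b) * (r : ℂ) + conj b * (a - b) * (s : ℂ))
        = 2 * (a - b) * ((s : ℂ)) ^ 2 * (r : ℂ) * ((s : ℂ) - (r : ℂ)) := by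
      linear_combination (b + (-2 : ℂ)*b*(s:ℂ)^2 + (-1 : ℂ)*b^2*(conj a) + (-1 : ℂ)*a + (2 : ℂ)*a*(s:ℂ)^2 + (-1 : ℂ)*a*b*(conj b) + a*b*(conj a) + a*b^2*(conj a)*(conj b) + a^2*(conj b) + (-1 : ℂ)*a^2*b*(conj a)*(conj b)) * hR + ((2 : ℂ)*b*(r:ℂ)*(s:ℂ) + (-1 : ℂ)*b^2*(conj b) + b^2*(conj a) + (-2 : ℂ)*a*(r:ℂ)*(s:ℂ) + (2 : ℂ)*a*b*(conj b) + (-2 : ℂ)*a*b*(conj a) + (-1 : ℂ)*a^2*(conj b) + a^2*(conj a)) * hS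
    rw [h, sub_self] at h3
    have h4 : 2 * (a - b) * ((s : ℂ)) ^ 2 * (r : ℂ) * ((s : ℂ) - (r : ℂ)) ≠ 0 := by
      refine mul_ne_zero (mul_ne_zero (mul_ne_zero (mul_ne_zero two_ne_zero
        (sub_ne_zero.2 hab)) (pow_ne_zero _ (by exact_mod_cast hs.ne')))
        (by exact_mod_cast hr.ne')) (sub_ne_zero.2 (by exact_mod_cast hsr.ne'))
    exact h4 h3.symm
  -- nonzero scalars
  have hdet : a * conj b - conj a * b ≠ 0 := by
    intro h
    apply him
    have h2 := congrArg Complex.im h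
    simp [Complex.sub_im, Complex.mul_im, Complex.conj_re, Complex.conj_im] at h2 ⊢
    linarith
  have hCh : (a * conj a + 1) * conj b - (b * conj b + 1) * conj a ≠ 0 := by
    intro h
    apply him
    have hma : a * conj a = (Complex.normSq a : ℂ) := Complex.mul_conj a
    have hmb : b * conj b = (Complex.normSq b : ℂ) := Complex.mul_conj b
    have h1 : ((Complex.normSq a : ℂ) + 1) * conj b = ((Complex.normSq b : ℂ) + 1) * conj a := by
      linear_combination h - conj b * hma + conj a * hmb
    have h2 : a * conj b * ((Complex.normSq a : ℂ) + 1)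
        = ((Complex.normSq b : ℂ) + 1) * (Complex.normSq a : ℂ) := by
      linear_combination a * h1 + ((Complex.normSq b : ℂ) + 1) * hma
    have h3 := congrArg Complex.im h2
    simp [Complex.mul_im, Complex.add_re, Complex.add_im, Complex.ofReal_re,
      Complex.ofReal_im, Complex.mul_re] at h3
    rcases h3 with h3 | h3
    · simp [Complex.mul_im, Complex.conj_re, Complex.conj_im]; linarith
    · nlinarith [Complex.normSq_nonneg a]
  have hd : a * conj a - b * conj b ≠ 0 := by
    rw [Complex.mul_conj, Complex.mul_conj]
    intro h
    apply habs
    have h2 : Complex.normSq a = Complex.normSq b := by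
      have := sub_eq_zero.1 h
      exact_mod_cast this
    rw [Complex.norm_def, Complex.norm_def, h2]
  -- the two symmetric-function identities
  have F4 : (endpt a b + endpt b a) * ((a * conj a + 1) * conj b - (b * conj b + 1) * conj a)
      = 2 * (a * conj b - conj a * b) := by
    rw [hea, heb, div_add_div _ _ hD0 hD20, div_mul_eq_mul_div,
      div_eq_iff (mul_ne_zero hD0 hD20)]
    linear_combination (b*(conj b) + b*(conj a) + (-2 : ℂ)*b^2*(conj a)*(conj b) + (-1 : ℂ)*b^2*(conj a)^2 + b^3*(conj a)^2*(conj b) + (-1 : ℂ)*a*(conj b) + (-1 : ℂ)*a*(conj a) + (-1 : ℂ)*a*b*(conj b)^2 + a*b*(conj a)^2 + (2 : ℂ)*a*b^2*(conj a)*(conj b)^2 + a*b^2*(conj a)^2*(conj b) + (-1 : ℂ)*a*b^3*(conj a)^2*(conj b)^2 + a^2*(conj b)^2 + (2 : ℂ)*a^2*(conj a)*(conj b) + (-1 : ℂ)*a^2*b*(conj a)*(conj b)^2 + (-2 : ℂ)*a^2*b*(conj a)^2*(conj b) + (-1 : ℂ)*a^3*(conj a)*(conj b)^2 + a^3*b*(conj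 a)^2*(conj b)^2) * hR + ((-1 : ℂ)*b^2*(conj b)^2 + b^2*(conj a)^2 + b^3*(conj a)*(conj b)^2 + (-1 : ℂ)*b^3*(conj a)^2*(conj b) + (2 : ℂ)*a*b*(conj b)^2 + (-2 : ℂ)*a*b*(conj a)^2 + (-1 : ℂ)*a*b^2*(conj a)*(conj b)^2 + a*b^2*(conj a)^2*(conj b) + (-1 : ℂ)*a^2*(conj b)^2 + a^2*(conj a)^2 + (-1 : ℂ)*a^2*b*(conj a)*(conj b)^2 + a^2*b*(conj a)^2*(conj b) + a^3*(conj a)*(conj b)^2 + (-1 : ℂ)*a^3*(conj a)^2*(conj b)) * hS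
  have F5 : (endpt a b * endpt b a) * ((a * conj a + 1) * conj b - (b * conj b + 1) * conj a)
      = a * (b * conj b + 1) - b * (a * conj a + 1) := by
    rw [hea, heb, div_mul_div_comm, div_mul_eq_mul_div,
      div_eq_iff (mul_ne_zero hD0 hD20)]
    linear_combination (b + (-1 : ℂ)*b^2*(conj a) + (-1 : ℂ)*a + (-1 : ℂ)*a*b*(conj b) + a*b*(conj a) + a*b^3*(conj a)^2*(conj b) + a^2*(conj b) + a^2*b^2*(conj a)*(conj b)^2 + (-1 : ℂ)*a^2*b^2*(conj a)^2*(conj b) + (-1 : ℂ)*a^2*b^3*(conj a)^2*(conj b)^2 + (-1 : ℂ)*a^3*b*(conj a)*(conj b)^2 + a^3*b^2*(conj a)^2*(conj b)^2) * hR + ((-1 : ℂ)*b^2*(conj b) + b^2*(conj a) + (2 : ℂ)*a*b*(conj b) + (-2 : ℂ)*a*b*(conj a) + a*b^3*(conj a)*(conj b)^2 + (-1 : ℂ)*a*b^3*(conj a)^2*(conj b) + (-1 : ℂ)*a^2*(conj b) + a^2*(conj a) + (-2 : ℂ)*a^2*b^2*(conj a)*(conj b)^2 + (2 : ℂ)*a^2*b^2*(conj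 a)^2*(conj b) + a^3*b*(conj a)*(conj b)^2 + (-1 : ℂ)*a^3*b*(conj a)^2*(conj b)) * hS
  exact assemble a b (endpt a b) (endpt b a) F1 F2 hxy hCh hd hdet F4 F5

lemma ineq (na nb p q : ℝ) (hna : na < 1) (hnb : nb < 1) (h0a : 0 ≤ na) (h0b : 0 ≤ nb)
    (hpq : p ^ 2 + q ^ 2 = na * nb) (hq : q ≠ 0) :
    (na - nb) ^ 2 < na * (1 - nb) ^ 2 + nb * (1 - na) ^ 2 - 2 * p * (1 - na) * (1 - nb) := by
  have hq2 : 0 < q ^ 2 := by positivity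
  have hprod : 0 < na * nb := by nlinarith [sq_nonneg p]
  have h0a' : 0 < na := by nlinarith
  have h0b' : 0 < nb := by nlinarith
  have hL0 : 0 < (1 - na) * (1 - nb) * (na + nb) := by
    apply mul_pos (mul_pos (by linarith) (by linarith)) (by linarith)
  set G : ℝ := na * (1 - nb) ^ 2 + nb * (1 - na) ^ 2 - 2 * p * (1 - na) * (1 - nb)
    - (na - nb) ^ 2 with hGdef
  have key : G * (G + 4 * p * (1 - na) * (1 - nb))
      = (1 - na) ^ 2 * (1 - nb) ^ 2 * ((na - nb) ^ 2 + 4 * q ^ 2) := by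
    rw [hGdef]; linear_combination (-4 * (1 - na) ^ 2 * (1 - nb) ^ 2) * hpq
  have hRHS : 0 < (1 - na) ^ 2 * (1 - nb) ^ 2 * ((na - nb) ^ 2 + 4 * q ^ 2) := by
    have e1 : 0 < (1 - na) ^ 2 := pow_pos (by linarith) 2
    have e2 : 0 < (1 - nb) ^ 2 := pow_pos (by linarith) 2
    apply mul_pos (mul_pos e1 e2)
    nlinarith [sq_nonneg (na - nb)]
  have hGpos : 0 < G := by
    by_contra hG
    push_neg at hG
    have hid : G + (G + 4 * p * (1 - na) * (1 - nb)) = 2 * ((1 - na) * (1 - nb) * (na + nb)) := by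
      rw [hGdef]; ring
    have hH : 0 < G + 4 * p * (1 - na) * (1 - nb) := by linarith
    have : G * (G + 4 * p * (1 - na) * (1 - nb)) ≤ 0 :=
      mul_nonpos_of_nonpos_of_nonneg hG hH.le
    rw [key] at this
    linarith
  rw [hGdef] at hGpos
  linarith
theorem stmt13 (a b : ℂ) (ha : ‖a‖ < 1) (hb : ‖b‖ < 1)
    (ha0 : a ≠ 0) (hb0 : b ≠ 0)
    (hnc : a * conj b ∉ Set.range (Complex.ofReal))
    (habs : ‖a‖ ≠ ‖b‖)
    (c : ℂ) (hc : c = LIS a b (endpt a b) (endpt b a))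
    (m : ℂ) (hm : ‖m‖ < 1)
    (hm1 : rho a m = rho a b / 2) (hm2 : rho m b = rho a b / 2) :
    1 < ‖c‖ ∧ ‖m - c‖ ^ 2 = ‖c‖ ^ 2 - 1 := by
  have hcW : c = (a * (1 - b * conj b) - b * (1 - a * conj a)) / (a * conj a - b * conj b) :=
    hc.trans (c_eq a b ha hb hnc habs)
  have hma : a * conj a = ((Complex.normSq a : ℝ) : ℂ) := Complex.mul_conj a
  have hmb : b * conj b = ((Complex.normSq b : ℝ) : ℂ) := Complex.mul_conj b
  have hΔ : a * conj a - b * conj b = ((Complex.normSq a - Complex.normSq b : ℝ) : ℂ) := by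
    rw [hma, hmb]; push_cast; ring
  have hnane : Complex.normSq a ≠ Complex.normSq b := by
    intro h; exact habs (by rw [Complex.norm_def, Complex.norm_def, h])
  have hΔ0 : Complex.normSq a - Complex.normSq b ≠ 0 := sub_ne_zero.2 hnane
  have hΔc : ((Complex.normSq a - Complex.normSq b : ℝ) : ℂ) ≠ 0 := by exact_mod_cast hΔ0
  have hcW2 : c = (a * (1 - b * conj b) - b * (1 - a * conj a))
      / ((Complex.normSq a - Complex.normSq b : ℝ) : ℂ) := by rw [hcW, hΔ]
  have him : (a * conj b).im ≠ 0 := by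
    intro h0
    exact hnc ⟨(a * conj b).re, by apply Complex.ext <;> simp [h0]⟩
  have hpq : (a * conj b).re ^ 2 + (a * conj b).im ^ 2
      = Complex.normSq a * Complex.normSq b := by
    rw [← Complex.normSq_conj b, ← Complex.normSq_mul, Complex.normSq_apply]; ring
  have hna1 : Complex.normSq a < 1 := by
    rw [← Complex.sq_norm]; nlinarith [norm_nonneg a]
  have hnb1 : Complex.normSq b < 1 := by
    rw [← Complex.sq_norm]; nlinarith [norm_nonneg b]
  have hWnorm : Complex.normSq (a * (1 - b * conj b) - b * (1 - a * conj a))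
      = Complex.normSq a * (1 - Complex.normSq b) ^ 2
        + Complex.normSq b * (1 - Complex.normSq a) ^ 2
        - 2 * (a * conj b).re * (1 - Complex.normSq a) * (1 - Complex.normSq b) := by
    simp [Complex.normSq_apply, Complex.mul_re, Complex.mul_im, Complex.sub_re,
      Complex.sub_im, Complex.one_re, Complex.one_im, Complex.conj_re, Complex.conj_im]
    ring
  have hineq : (Complex.normSq a - Complex.normSq b) ^ 2
      < Complex.normSq (a * (1 - b * conj b) - b * (1 - a * conj a)) := by
    rw [hWnorm]
    exact ineq _ _ _ _ hna1 hnb1 (Complex.normSq_nonneg a) (Complex.normSq_nonneg b) hpq him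
  have hΔsq : 0 < (Complex.normSq a - Complex.normSq b) ^ 2 :=
    lt_of_le_of_ne (sq_nonneg _) (Ne.symm (pow_ne_zero 2 hΔ0))
  have habsc2 : ‖c‖ ^ 2
      = Complex.normSq (a * (1 - b * conj b) - b * (1 - a * conj a))
        / (Complex.normSq a - Complex.normSq b) ^ 2 := by
    rw [hcW2, Complex.sq_norm, Complex.normSq_div, Complex.normSq_ofReal, sq]
  have h1c : 1 < ‖c‖ ^ 2 := by
    rw [habsc2, lt_div_iff₀ hΔsq]; linarith
  constructor
  · nlinarith [norm_nonneg c]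
  -- part 2
  · have h1a' : 0 < 1 - ‖a‖ ^ 2 := by nlinarith [norm_nonneg a]
    have h1b' : 0 < 1 - ‖b‖ ^ 2 := by nlinarith [norm_nonneg b]
    have h1m' : 0 < 1 - ‖m‖ ^ 2 := by nlinarith [norm_nonneg m]
    have hrr : rho a m = rho m b := hm1.trans hm2.symm
    unfold rho at hrr
    have ht : ‖a - m‖ / Real.sqrt ((1 - ‖a‖ ^ 2) * (1 - ‖m‖ ^ 2))
        = ‖m - b‖ / Real.sqrt ((1 - ‖m‖ ^ 2) * (1 - ‖b‖ ^ 2)) :=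
      Real.arsinh_injective (by linarith)
    have hsq := congrArg (fun t => t ^ 2) ht
    simp only [div_pow] at hsq
    rw [Real.sq_sqrt (le_of_lt (mul_pos h1a' h1m')),
      Real.sq_sqrt (le_of_lt (mul_pos h1m' h1b'))] at hsq
    rw [div_eq_div_iff (by positivity) (by positivity)] at hsq
    have hE : Complex.normSq (a - m) * (1 - Complex.normSq b)
        = Complex.normSq (m - b) * (1 - Complex.normSq a) := by
      apply mul_right_cancel₀ (ne_of_gt h1m' :  (1 - ‖m‖ ^ 2) ≠ 0)
      rw [← Complex.sq_norm (a - m), ← Complex.sq_norm (m - b), ← Complex.sq_norm a,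
        ← Complex.sq_norm b]
      linear_combination hsq
    have key : Complex.normSq (m * ((Complex.normSq a - Complex.normSq b : ℝ) : ℂ)
          - (a * (1 - b * conj b) - b * (1 - a * conj a)))
        = Complex.normSq (a * (1 - b * conj b) - b * (1 - a * conj a))
          - (Complex.normSq a - Complex.normSq b) ^ 2 := by
      simp only [Complex.normSq_apply, Complex.mul_re, Complex.mul_im, Complex.sub_re,
        Complex.sub_im, Complex.one_re, Complex.one_im, Complex.conj_re, Complex.conj_im,
        Complex.ofReal_re, Complex.ofReal_im] at hE ⊢
      linear_combination (a.re * a.re + a.im * a.im - b.re * b.re - b.im * b.im) * hE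
    rw [hcW2]
    have hsplit : (m * ((Complex.normSq a - Complex.normSq b : ℝ) : ℂ)
            - (a * (1 - b * conj b) - b * (1 - a * conj a)))
          / ((Complex.normSq a - Complex.normSq b : ℝ) : ℂ)
        = m - (a * (1 - b * conj b) - b * (1 - a * conj a))
          / ((Complex.normSq a - Complex.normSq b : ℝ) : ℂ) := by
      rw [sub_div, mul_div_cancel_right₀ _ hΔc]
    rw [← hsplit]
    rw [Complex.sq_norm, Complex.sq_norm, Complex.normSq_div, Complex.normSq_div,
      Complex.normSq_ofReal, key]
    field_simp
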